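/- For γ > 0 and σ₀ > 0, the function Q_γ(σ) = -σ^{-γ/(1+γ)} (1 + γσ₀²/σ²)^{-1/2} on (0, ∞) attains its minimum uniquely at σ = σ₀. -/

import Mathlib

open Real

private lemma keyA (γ : ℝ) (hγ : 0 < γ) {t : ℝ} (ht : 0 < t) (ht1 : t ≠ 1) :
    (1 + γ) * t ^ (1 / (1 + γ)) < t + γ := by
  have h1γ : 0 < 1 + γ := by linarith
  set u := t ^ (1 / (1 + γ)) with hu
  have hupos : 0 < u := rpow_pos_of_pos ht _
  have hut : u ^ (1 + γ) = t := by
    rw [hu, ← rpow_mul ht.le, one_div_mul_cancel h1γ.ne', rpow_one]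
  have hu1 : u ≠ 1 := by
    intro h
    apply ht1
    rw [← hut, h, one_rpow]
  have hb := one_add_mul_self_lt_rpow_one_add (s := u - 1) (by linarith) (by
      intro h; apply hu1; linarith) (p := 1 + γ) (by linarith)
  have : (1 + (u - 1)) = u := by ring
  rw [this, hut] at hb
  nlinarith [hb]

private lemma keyB (γ σ₀ : ℝ) (hγ : 0 < γ) (hσ₀ : 0 < σ₀) {σ : ℝ} (hσ : 0 < σ) (hne : σ ≠ σ₀) :
    σ ^ 2 * (σ₀ ^ 2 + γ * σ₀ ^ 2) ^ (1 + γ) < σ₀ ^ 2 * (σ ^ 2 + γ * σ₀ ^ 2) ^ (1 + γ) := by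
  have h1γ : 0 < 1 + γ := by linarith
  set t : ℝ := σ ^ 2 / σ₀ ^ 2 with hts
  have hσ₀2 : (0:ℝ) < σ₀ ^ 2 := by positivity
  have ht : 0 < t := by positivity
  have ht1 : t ≠ 1 := by
    intro h
    apply hne
    rw [hts] at h
    field_simp at h
    exact (pow_left_inj₀ hσ.le hσ₀.le two_ne_zero).mp h
  have h := keyA γ hγ ht ht1
  have h2 : ((1 + γ) * t ^ (1 / (1 + γ))) ^ (1 + γ) < (t + γ) ^ (1 + γ) :=
    rpow_lt_rpow (by positivity) h h1γ
  rw [mul_rpow (by positivity) (by positivity), ← rpow_mul ht.le,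
    one_div_mul_cancel h1γ.ne', rpow_one] at h2
  have e1 : σ₀ ^ 2 + γ * σ₀ ^ 2 = σ₀ ^ 2 * (1 + γ) := by ring
  have e2 : σ ^ 2 + γ * σ₀ ^ 2 = σ₀ ^ 2 * (t + γ) := by
    rw [hts]; field_simp
  rw [e1, e2, mul_rpow hσ₀2.le h1γ.le, mul_rpow hσ₀2.le (by positivity)]
  have hσ2t : σ ^ 2 = σ₀ ^ 2 * t := by rw [hts]; field_simp
  rw [hσ2t]
  have hp : (0:ℝ) < (σ₀ ^ 2) ^ (1 + γ) := rpow_pos_of_pos hσ₀2 _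
  calc σ₀ ^ 2 * t * ((σ₀ ^ 2) ^ (1+γ) * (1+γ) ^ (1+γ))
      = σ₀ ^ 2 * (σ₀ ^ 2) ^ (1+γ) * ((1+γ) ^ (1+γ) * t) := by ring
    _ < σ₀ ^ 2 * (σ₀ ^ 2) ^ (1+γ) * ((t+γ) ^ (1+γ)) := by
        apply mul_lt_mul_of_pos_left h2 (by positivity)
    _ = σ₀ ^ 2 * ((σ₀ ^ 2) ^ (1+γ) * (t+γ) ^ (1+γ)) := by ring

private lemma fclosed (γ σ₀ : ℝ) (hγ : 0 < γ) (hσ₀ : 0 < σ₀) {s : ℝ} (hs : 0 < s) :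
    s ^ (-(γ / (1 + γ))) * (1 + γ * σ₀ ^ 2 / s ^ 2) ^ (-(1 / 2) : ℝ)
      = s ^ (1 / (1 + γ)) * (s ^ 2 + γ * σ₀ ^ 2) ^ (-(1 / 2) : ℝ) := by
  have h1γ : 0 < 1 + γ := by linarith
  have hs2 : (0:ℝ) < s ^ 2 := by positivity
  have hA : (0:ℝ) < s ^ 2 + γ * σ₀ ^ 2 := by positivity
  have e1 : 1 + γ * σ₀ ^ 2 / s ^ 2 = (s ^ 2 + γ * σ₀ ^ 2) / s ^ 2 := by
    field_simp
  rw [e1, div_rpow hA.le hs2.le]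
  have e2 : (s ^ 2) ^ (-(1 / 2) : ℝ) = s ^ (-1 : ℝ) := by
    rw [← rpow_natCast s 2, ← rpow_mul hs.le]
    norm_num
  have e4 : s ^ (-(γ / (1 + γ))) * s = s ^ (1 / (1 + γ)) := by
    calc s ^ (-(γ / (1 + γ))) * s = s ^ (-(γ / (1 + γ))) * s ^ (1:ℝ) := by
          rw [rpow_one]
      _ = s ^ (-(γ / (1 + γ)) + 1) := (rpow_add hs _ _).symm
      _ = s ^ (1 / (1 + γ)) := by congr 1; field_simp; ring
  rw [e2, rpow_neg_one, div_eq_mul_inv _ s⁻¹, inv_inv, mul_comm ((s ^ 2 + γ * σ₀ ^ 2) ^ (-(1/2):ℝ)) s,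
    ← mul_assoc, e4]

private lemma fpow (γ σ₀ : ℝ) (hγ : 0 < γ) (hσ₀ : 0 < σ₀) {s : ℝ} (hs : 0 < s) :
    (s ^ (1 / (1 + γ)) * (s ^ 2 + γ * σ₀ ^ 2) ^ (-(1 / 2) : ℝ)) ^ (2 * (1 + γ))
      = s ^ 2 * ((s ^ 2 + γ * σ₀ ^ 2) ^ (1 + γ))⁻¹ := by
  have h1γ : 0 < 1 + γ := by linarith
  have hA : (0:ℝ) < s ^ 2 + γ * σ₀ ^ 2 := by positivity
  rw [mul_rpow (by positivity) (by positivity), ← rpow_mul hs.le, ← rpow_mul hA.le]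
  have e1 : 1 / (1 + γ) * (2 * (1 + γ)) = (2:ℝ) := by field_simp
  have e2 : (-(1 / 2) : ℝ) * (2 * (1 + γ)) = -(1 + γ) := by ring
  rw [e1, e2, rpow_neg hA.le, show (2:ℝ) = ((2:ℕ):ℝ) by norm_num, rpow_natCast]

private lemma fstrict (γ σ₀ : ℝ) (hγ : 0 < γ) (hσ₀ : 0 < σ₀) {σ : ℝ} (hσ : 0 < σ)
    (hne : σ ≠ σ₀) :
    σ ^ (-(γ / (1 + γ))) * (1 + γ * σ₀ ^ 2 / σ ^ 2) ^ (-(1 / 2) : ℝ)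
      < σ₀ ^ (-(γ / (1 + γ))) * (1 + γ * σ₀ ^ 2 / σ₀ ^ 2) ^ (-(1 / 2) : ℝ) := by
  have h1γ : 0 < 1 + γ := by linarith
  rw [fclosed γ σ₀ hγ hσ₀ hσ, fclosed γ σ₀ hγ hσ₀ hσ₀]
  by_contra hcon
  push_neg at hcon
  have hf0 : (0:ℝ) ≤ σ₀ ^ (1 / (1 + γ)) * (σ₀ ^ 2 + γ * σ₀ ^ 2) ^ (-(1 / 2) : ℝ) := by
    positivity
  have hle := rpow_le_rpow hf0 hcon (by positivity : (0:ℝ) ≤ 2 * (1 + γ))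
  rw [fpow γ σ₀ hγ hσ₀ hσ, fpow γ σ₀ hγ hσ₀ hσ₀] at hle
  have hAσ : (0:ℝ) < (σ ^ 2 + γ * σ₀ ^ 2) ^ (1 + γ) := by positivity
  have hA0 : (0:ℝ) < (σ₀ ^ 2 + γ * σ₀ ^ 2) ^ (1 + γ) := by positivity
  rw [← div_eq_mul_inv, ← div_eq_mul_inv, div_le_div_iff₀ hA0 hAσ] at hle
  have := keyB γ σ₀ hγ hσ₀ hσ hne
  nlinarith [this, hle]

theorem Qgamma_min_at_sigma0 (γ σ₀ : ℝ) (hγ : 0 < γ) (hσ₀ : 0 < σ₀) :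
    ∀ σ ∈ Set.Ioi (0 : ℝ),
      (fun s : ℝ => -s ^ (-(γ / (1 + γ))) * (1 + γ * σ₀ ^ 2 / s ^ 2) ^ (-(1 / 2) : ℝ)) σ₀ ≤
        (fun s : ℝ => -s ^ (-(γ / (1 + γ))) * (1 + γ * σ₀ ^ 2 / s ^ 2) ^ (-(1 / 2) : ℝ)) σ ∧
      ((fun s : ℝ => -s ^ (-(γ / (1 + γ))) * (1 + γ * σ₀ ^ 2 / s ^ 2) ^ (-(1 / 2) : ℝ)) σ =
        (fun s : ℝ => -s ^ (-(γ / (1 + γ))) * (1 + γ * σ₀ ^ 2 / s ^ 2) ^ (-(1 / 2) : ℝ)) σ₀ →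
        σ = σ₀) := by
  intro σ hσ
  simp only [Set.mem_Ioi] at hσ
  by_cases hne : σ = σ₀
  · subst hne
    exact ⟨le_refl _, fun _ => rfl⟩
  · have h := fstrict γ σ₀ hγ hσ₀ hσ hne
    constructor
    · simp only [neg_mul]
      linarith
    · intro heq
      simp only [neg_mul, neg_inj] at heq
      linarith [h, heq.le, heq.ge]
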